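/- Given points x₁,…,x_N in a convex set S ⊆ ℝ^d and a differentiable strictly convex f : S → ℝ, the arithmetic mean μ = (1/N)∑ᵢ xᵢ is the unique minimizer over c ∈ S of (1/N)∑ᵢ D_f(xᵢ, c), where D_f is the Bregman divergence of f. -/

import Mathlib

open RealInnerProductSpace Finset

lemma subgrad {E : Type*} [NormedAddCommGroup E] [InnerProductSpace ℝ E] [CompleteSpace E]
    {S : Set E} {f : E → ℝ} (hconv : ConvexOn ℝ S f)
    {c y : E} {g : E} (hc : c ∈ S) (hy : y ∈ S) (hg : HasGradientAt f g c) :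
    f c + ⟪y - c, g⟫ ≤ f y := by
  have hL : ∀ t : ℝ, HasDerivAt (fun t : ℝ => c + t • (y - c)) (y - c) t := by
    intro t
    simpa using ((hasDerivAt_id t).smul_const (y - c)).const_add c
  have hF : HasFDerivAt f ((InnerProductSpace.toDual ℝ E) g) c := by
    rwa [hasGradientAt_iff_hasFDerivAt] at hg
  have hF0 : HasFDerivAt f ((InnerProductSpace.toDual ℝ E) g) (c + (0:ℝ) • (y - c)) := by
    simpa using hF
  have hh : HasDerivAt (fun t : ℝ => f (c + t • (y - c))) ⟪g, y - c⟫ 0 := by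
    have h := hF0.comp_hasDerivAt 0 (hL 0)
    simp only [InnerProductSpace.toDual_apply_apply] at h
    exact h
  have hslope : Filter.Tendsto (slope (fun t : ℝ => f (c + t • (y - c))) 0)
      (nhdsWithin 0 (Set.Ioi 0)) (nhds ⟪g, y - c⟫) :=
    (hasDerivAt_iff_tendsto_slope.mp hh).mono_left
      (nhdsWithin_mono _ fun t ht => ne_of_gt ht)
  have hbound : ∀ᶠ t in nhdsWithin (0:ℝ) (Set.Ioi 0),
      slope (fun t : ℝ => f (c + t • (y - c))) 0 t ≤ f y - f c := by
    filter_upwards [Ioc_mem_nhdsGT_of_mem (by norm_num : (0:ℝ) ∈ Set.Ico 0 1)] with t ht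
    have h1 : f (c + t • (y - c)) ≤ (1 - t) * f c + t * f y := by
      have := hconv.2 hc hy (by linarith [ht.2] : (0:ℝ) ≤ 1 - t) (le_of_lt ht.1) (by ring)
      have heq : (1 - t) • c + t • y = c + t • (y - c) := by
        simp [smul_sub, sub_smul]; abel
      simpa [heq, smul_eq_mul] using this
    rw [slope_def_field]
    simp only [zero_smul, add_zero, sub_zero]
    rw [div_le_iff₀ ht.1]
    nlinarith
  have hle := le_of_tendsto hslope hbound
  have hinner : ⟪g, y - c⟫ = ⟪y - c, g⟫ := real_inner_comm _ _
  linarith [hinner ▸ hle]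

lemma subgrad_strict {E : Type*} [NormedAddCommGroup E] [InnerProductSpace ℝ E] [CompleteSpace E]
    {S : Set E} {f : E → ℝ} (hconv : StrictConvexOn ℝ S f)
    {c y : E} {g : E} (hc : c ∈ S) (hy : y ∈ S) (hne : c ≠ y) (hg : HasGradientAt f g c) :
    f c + ⟪y - c, g⟫ < f y := by
  have hmS : (1/2 : ℝ) • c + (1/2 : ℝ) • y ∈ S :=
    hconv.1 hc hy (by norm_num) (by norm_num) (by norm_num)
  have hmlt : f ((1/2 : ℝ) • c + (1/2 : ℝ) • y) < (1/2) * f c + (1/2) * f y := by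
    simpa using hconv.2 hc hy hne (by norm_num : (0:ℝ) < 1/2)
      (by norm_num : (0:ℝ) < 1/2) (by norm_num)
  have hsub := subgrad hconv.convexOn hc hmS hg
  have hmc : ((1/2 : ℝ) • c + (1/2 : ℝ) • y) - c = (1/2 : ℝ) • (y - c) := by module
  rw [hmc, real_inner_smul_left] at hsub
  linarith

/-- The arithmetic mean of points `x₁, …, x_N` in a convex set `S` is the unique
minimizer over `c ∈ S` of the average Bregman divergence `(1/N) ∑ᵢ D_f(xᵢ, c)`. -/
theorem bregman_mean_unique_minimizer {d N : ℕ} (hN : 0 < N)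
    (S : Set (EuclideanSpace ℝ (Fin d))) (hS : Convex ℝ S)
    (x : Fin N → EuclideanSpace ℝ (Fin d)) (hx : ∀ i, x i ∈ S)
    (f : EuclideanSpace ℝ (Fin d) → ℝ)
    (f' : EuclideanSpace ℝ (Fin d) → EuclideanSpace ℝ (Fin d))
    (hconv : StrictConvexOn ℝ S f)
    (hdiff : ∀ y ∈ S, HasGradientAt f (f' y) y)
    (μ : EuclideanSpace ℝ (Fin d)) (hμdef : μ = (N : ℝ)⁻¹ • ∑ i, x i)
    (hμS : μ ∈ S) :
    (∀ c ∈ S,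
        (N : ℝ)⁻¹ * ∑ i, (f (x i) - f μ - ⟪x i - μ, f' μ⟫) ≤
          (N : ℝ)⁻¹ * ∑ i, (f (x i) - f c - ⟪x i - c, f' c⟫)) ∧
    (∀ c ∈ S,
        (N : ℝ)⁻¹ * ∑ i, (f (x i) - f c - ⟪x i - c, f' c⟫) =
          (N : ℝ)⁻¹ * ∑ i, (f (x i) - f μ - ⟪x i - μ, f' μ⟫) → c = μ) := by
  have hNR : (N : ℝ) ≠ 0 := Nat.cast_ne_zero.mpr hN.ne'
  have hsumx : ∑ i, x i = (N : ℝ) • μ := by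
    rw [hμdef, smul_smul, mul_inv_cancel₀ hNR, one_smul]
  have hsum : ∀ c : EuclideanSpace ℝ (Fin d),
      ∑ i, (f (x i) - f c - ⟪x i - c, f' c⟫) =
        (∑ i, f (x i)) - N * f c - N * ⟪μ - c, f' c⟫ := by
    intro c
    have h1 : ∑ i, ⟪x i - c, f' c⟫ = (N : ℝ) * ⟪μ - c, f' c⟫ := by
      rw [← sum_inner]
      have : ∑ i, (x i - c) = (N : ℝ) • (μ - c) := by
        rw [Finset.sum_sub_distrib, hsumx, Finset.sum_const, Finset.card_univ,
          Fintype.card_fin, smul_sub, ← Nat.cast_smul_eq_nsmul ℝ]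
      rw [this, real_inner_smul_left]
    simp only [Finset.sum_sub_distrib, h1, Finset.sum_const, Finset.card_univ,
      Fintype.card_fin, nsmul_eq_mul]
  have hdelta : ∀ c : EuclideanSpace ℝ (Fin d),
      (∑ i, (f (x i) - f c - ⟪x i - c, f' c⟫)) -
        (∑ i, (f (x i) - f μ - ⟪x i - μ, f' μ⟫)) =
        (N : ℝ) * (f μ - (f c + ⟪μ - c, f' c⟫)) := by
    intro c
    rw [hsum c, hsum μ]
    have : ⟪μ - μ, f' μ⟫ = 0 := by simp
    rw [this]; ring
  constructor
  · intro c hc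
    have hsg : f c + ⟪μ - c, f' c⟫ ≤ f μ := subgrad hconv.convexOn hc hμS (hdiff c hc)
    have h0 : 0 ≤ (N : ℝ) * (f μ - (f c + ⟪μ - c, f' c⟫)) :=
      mul_nonneg (Nat.cast_nonneg N) (by linarith)
    rw [← hdelta c] at h0
    have := inv_nonneg.mpr (Nat.cast_nonneg N : (0:ℝ) ≤ N)
    nlinarith
  · intro c hc heq
    by_contra hne
    have hsg : f c + ⟪μ - c, f' c⟫ < f μ :=
      subgrad_strict hconv hc hμS hne (hdiff c hc)
    have heq' : ∑ i, (f (x i) - f c - ⟪x i - c, f' c⟫) =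
        ∑ i, (f (x i) - f μ - ⟪x i - μ, f' μ⟫) :=
      mul_left_cancel₀ (inv_ne_zero hNR) heq
    have := hdelta c
    rw [heq', sub_self] at this
    have hNpos : (0:ℝ) < N := Nat.cast_pos.mpr hN
    nlinarith
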